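/- Let X be a real Banach space, 0 ≤ s ≤ τ, and let R(t,r) ∈ L(X) for s ≤ r ≤ t ≤ τ be a family of bounded linear operators with (t,r) ↦ R(t,r)x continuous for every x ∈ X and uniformly bounded in operator norm. Let u : [s,τ] → X be continuous and set H(v) = ∫ₛᵛ u(w) dw. Suppose given, for each r ∈ [s,τ] and v ∈ [s,r], linear maps G(r,v) and G'(r,v) (defined on a subspace of X containing all relevant elements) such that: (i) for each r, the map v ↦ G(r,v)(H(v)) is differentiable on [s,r] with derivative G'(r,v)(H(v)) + G(r,v)(u(v)); (ii) the maps (r,v) ↦ G(r,v)(u(v)) and (r,v) ↦ G'(r,v)(H(v)) are continuous, so that all iterated integrals below exist. Assume moreover the variation-of-constants identity u(t) = R(t,s)y − ∫ₛᵗ R(t,r)(∫ₛʳ G(r,v)(u(v)) dv) dr holds for all t ∈ [s,τ], where y = u(s). Then for all t ∈ [s,τ]: u(t) = R(t,s)y + ∫ₛᵗ R(t,r) P(r) dr, where P(r) = −G(r,r)(∫ₛʳ u(v) dv) + ∫ₛʳ G'(r,v)(∫ₛᵛ u(w) dw) dv. -/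

import Mathlib

open MeasureTheory

/-- from the variation-of-constants identity
`u(t) = R(t,s)y − ∫ₛᵗ R(t,r)(∫ₛʳ G(r,v)u(v)dv)dr` one deduces
`u(t) = R(t,s)y + ∫ₛᵗ R(t,r)P(r)dr` with
`P(r) = −G(r,r)(∫ₛʳ u) + ∫ₛʳ G'(r,v)(∫ₛᵛ u)dv`. -/
theorem stmt_15
    {X : Type*} [NormedAddCommGroup X] [NormedSpace ℝ X] [CompleteSpace X]
    (s τ : ℝ) (hs : 0 ≤ s) (hsτ : s ≤ τ)
    (R : ℝ → ℝ → X →L[ℝ] X)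
    -- strong continuity of (t,r) ↦ R(t,r)x on the triangle s ≤ r ≤ t ≤ τ
    (hR_strong : ∀ x : X, ContinuousOn (fun p : ℝ × ℝ => R p.1 p.2 x)
      {p : ℝ × ℝ | s ≤ p.2 ∧ p.2 ≤ p.1 ∧ p.1 ≤ τ})
    -- uniform boundedness in operator norm
    (MR : ℝ) (hMR : ∀ t r : ℝ, s ≤ r → r ≤ t → t ≤ τ → ‖R t r‖ ≤ MR)
    (u : ℝ → X) (hu : ContinuousOn u (Set.Icc s τ))
    (G G' : ℝ → ℝ → X →ₗ[ℝ] X)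
    -- (i) differentiability: d/dv [G(r,v)(H(v))] = G'(r,v)(H(v)) + G(r,v)(u(v))
    (hderiv : ∀ r ∈ Set.Icc s τ, ∀ v ∈ Set.Icc s r,
      HasDerivWithinAt (fun v' : ℝ => G r v' (∫ w in s..v', u w))
        (G' r v (∫ w in s..v, u w) + G r v (u v)) (Set.Icc s r) v)
    -- (ii) continuity of (r,v) ↦ G(r,v)(u(v)) and (r,v) ↦ G'(r,v)(H(v))
    (hG_cont : ContinuousOn (fun p : ℝ × ℝ => G p.1 p.2 (u p.2))
      {p : ℝ × ℝ | s ≤ p.2 ∧ p.2 ≤ p.1 ∧ p.1 ≤ τ})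
    (hG'_cont : ContinuousOn (fun p : ℝ × ℝ => G' p.1 p.2 (∫ w in s..p.2, u w))
      {p : ℝ × ℝ | s ≤ p.2 ∧ p.2 ≤ p.1 ∧ p.1 ≤ τ})
    -- the variation-of-constants identity
    (hvoc : ∀ t ∈ Set.Icc s τ,
      u t = R t s (u s) - ∫ r in s..t, R t r (∫ v in s..r, G r v (u v))) :
    ∀ t ∈ Set.Icc s τ,
      u t = R t s (u s) + ∫ r in s..t, R t r
        (-(G r r (∫ v in s..r, u v)) +
          ∫ v in s..r, G' r v (∫ w in s..v, u w)) := by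

  intro t ht
  rw [hvoc t ht]
  rw [sub_eq_add_neg]
  congr 1
  rw [← intervalIntegral.integral_neg]
  apply intervalIntegral.integral_congr
  intro r hr
  rw [Set.uIcc_of_le ht.1] at hr
  have hrτ : r ∈ Set.Icc s τ := ⟨hr.1, hr.2.trans ht.2⟩
  have hmap : ∀ v ∈ Set.Icc s r, ((r : ℝ), v) ∈ {p : ℝ × ℝ | s ≤ p.2 ∧ p.2 ≤ p.1 ∧ p.1 ≤ τ} :=
    fun v hv => ⟨hv.1, hv.2, hrτ.2⟩
  have hcc : ContinuousOn (fun v : ℝ => ((r : ℝ), v)) (Set.Icc s r) :=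
    (continuous_const.prodMk continuous_id).continuousOn
  have hGcont : ContinuousOn (fun v => G r v (u v)) (Set.Icc s r) :=
    hG_cont.comp hcc hmap
  have hG'cont : ContinuousOn (fun v => G' r v (∫ w in s..v, u w)) (Set.Icc s r) :=
    hG'_cont.comp hcc hmap
  have hGi : IntervalIntegrable (fun v => G r v (u v)) volume s r := by
    apply ContinuousOn.intervalIntegrable
    rwa [Set.uIcc_of_le hr.1]
  have hG'i : IntervalIntegrable (fun v => G' r v (∫ w in s..v, u w)) volume s r := by
    apply ContinuousOn.intervalIntegrable
    rwa [Set.uIcc_of_le hr.1]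
  have hftc := intervalIntegral.integral_eq_sub_of_hasDeriv_right_of_le
    (f := fun v' : ℝ => G r v' (∫ w in s..v', u w))
    (f' := fun v : ℝ => G' r v (∫ w in s..v, u w) + G r v (u v))
    hr.1
    (fun v hv => (hderiv r hrτ v hv).continuousWithinAt)
    (fun v hv =>
      ((hderiv r hrτ v (Set.mem_Icc_of_Ioo hv)).hasDerivAt
        (Icc_mem_nhds hv.1 hv.2)).hasDerivWithinAt)
    (hG'i.add hGi)
  rw [intervalIntegral.integral_same, map_zero, sub_zero] at hftc
  rw [intervalIntegral.integral_add hG'i hGi] at hftc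
  have key : (∫ v in s..r, G r v (u v))
      = G r r (∫ w in s..r, u w) - ∫ v in s..r, G' r v (∫ w in s..v, u w) := by
    rw [← hftc]; abel
  show -(R t r) (∫ v in s..r, G r v (u v))
      = R t r (-(G r r (∫ v in s..r, u v)) + ∫ v in s..r, G' r v (∫ w in s..v, u w))
  rw [key, ← map_neg]
  congr 1
  abel
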